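/- Let D be a distribution over (X, Y) ∈ ℝᵈ × {±1} whose X-marginal is ε^{1/4}-anticoncentrated (at most an O(ε^{1/4}) fraction of mass lies within Euclidean distance ε^{1/4} of any hyperplane). Let w* ∈ ℝᵈ and let w' = min{1, ε^{-1/4}/‖w*‖}·w*. Then E[L(w', (X,Y))] ≤ E[L(w*, (X,Y))] + O(ε^{1/4}), where L is the hinge loss. -/

import Mathlib

open MeasureTheory
open scoped RealInnerProductSpace

/-- If the X-marginal of a distribution over `ℝᵈ × {±1}` is
`ε^{1/4}`-anticoncentrated (at most a `c·ε^{1/4}` fraction of mass within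
distance `ε^{1/4}` of any hyperplane), and `w'` is the rescaling of `w*` to
norm at most `ε^{-1/4}`, then the expected hinge loss of `w'` exceeds that of
`w*` by at most `O(ε^{1/4})` (a constant depending only on `c`). -/
theorem hinge_loss_rescaling_anticoncentrated (c : ℝ) (hc : 0 ≤ c) :
    ∃ C : ℝ, 0 < C ∧
      ∀ (d : ℕ) (μ : Measure (EuclideanSpace ℝ (Fin d) × ℝ))
        (_ : IsProbabilityMeasure μ)
        (ε : ℝ), 0 < ε → ε < 1 →
        ∀ (L : EuclideanSpace ℝ (Fin d) → EuclideanSpace ℝ (Fin d) → ℝ → ℝ),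
        (∀ w x y, L w x y = max 0 (1 - y * ⟪w, x⟫)) →
        (∀ᵐ p ∂μ, p.2 = 1 ∨ p.2 = -1) →
        -- anticoncentration of the X-marginal
        (∀ (u : EuclideanSpace ℝ (Fin d)) (b : ℝ), ‖u‖ = 1 →
          μ {p | |⟪u, p.1⟫ - b| ≤ ε ^ ((1:ℝ)/4)} ≤
            ENNReal.ofReal (c * ε ^ ((1:ℝ)/4))) →
        ∀ (wstar w' : EuclideanSpace ℝ (Fin d)),
          w' = min 1 (ε ^ (-(1:ℝ)/4) / ‖wstar‖) • wstar →
          Integrable (fun p => L wstar p.1 p.2) μ →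
          Integrable (fun p => L w' p.1 p.2) μ →
          (∫ p, L w' p.1 p.2 ∂μ) ≤
            (∫ p, L wstar p.1 p.2 ∂μ) + C * ε ^ ((1:ℝ)/4) := by
  refine ⟨2 * c + 1, by positivity, ?_⟩
  intro d μ hμ ε hε hε1 L hL hy hanti wstar w' hw' hInt hInt'
  set r := ε ^ ((1:ℝ)/4) with hrdef
  have hr0 : 0 < r := Real.rpow_pos_of_pos hε _
  have hCr : 0 ≤ (2 * c + 1) * r := by positivity
  have hrinv : ε ^ (-(1:ℝ)/4) = r⁻¹ := by
    rw [show -(1:ℝ)/4 = -((1:ℝ)/4) by ring, Real.rpow_neg hε.le]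
  by_cases hw0 : wstar = 0
  · subst hw0
    simp only [smul_zero] at hw'
    subst hw'
    linarith
  have hwn : 0 < ‖wstar‖ := norm_pos_iff.mpr hw0
  rcases le_or_gt 1 (ε ^ (-(1:ℝ)/4) / ‖wstar‖) with h1 | h1
  · rw [min_eq_left h1, one_smul] at hw'
    subst hw'
    linarith
  · -- main case
    rw [min_eq_right h1.le] at hw'
    set t : ℝ := ε ^ (-(1:ℝ)/4) / ‖wstar‖ with htdef
    have ht0 : 0 < t := by
      rw [htdef, hrinv]
      positivity
    have hwx : ∀ x : EuclideanSpace ℝ (Fin d), ⟪w', x⟫ = t * ⟪wstar, x⟫ := by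
      intro x
      rw [hw', real_inner_smul_left]
    have hw'norm : ‖w'‖ = r⁻¹ := by
      rw [hw', norm_smul, Real.norm_eq_abs, abs_of_pos ht0, htdef, hrinv,
        div_mul_cancel₀ _ hwn.ne']
    set u : EuclideanSpace ℝ (Fin d) := r • w' with hudef
    have hu : ‖u‖ = 1 := by
      rw [hudef, norm_smul, Real.norm_eq_abs, abs_of_pos hr0, hw'norm,
        mul_inv_cancel₀ hr0.ne']
    have hux : ∀ x : EuclideanSpace ℝ (Fin d), ⟪u, x⟫ = r * ⟪w', x⟫ := by
      intro x
      rw [hudef, real_inner_smul_left]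
    set S : Set (EuclideanSpace ℝ (Fin d) × ℝ) := {p | |⟪u, p.1⟫ - 0| ≤ r} with hSdef
    have hS : MeasurableSet S := by
      have hcont : Continuous fun p : EuclideanSpace ℝ (Fin d) × ℝ => |⟪u, p.1⟫ - 0| :=
        ((continuous_const.inner continuous_fst).sub continuous_const).abs
      exact measurableSet_le hcont.measurable measurable_const
    have key : ∀ᵐ p ∂μ, L w' p.1 p.2 ≤ L wstar p.1 p.2 + S.indicator (fun _ => (2:ℝ)) p := by
      filter_upwards [hy] with p hp
      have hy1 : |p.2| = 1 := by rcases hp with h | h <;> simp [h]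
      rw [hL, hL]
      by_cases hpS : p ∈ S
      · rw [Set.indicator_of_mem hpS]
        have h2 : |⟪w', p.1⟫| ≤ 1 := by
          have := hpS
          rw [hSdef, Set.mem_setOf_eq, hux, sub_zero, abs_mul, abs_of_pos hr0] at this
          nlinarith [abs_nonneg (⟪w', p.1⟫)]
        have h3 : |p.2 * ⟪w', p.1⟫| ≤ 1 := by rw [abs_mul, hy1, one_mul]; exact h2
        have h4 : max 0 (1 - p.2 * ⟪w', p.1⟫) ≤ 2 := by
          apply max_le (by norm_num)
          have := abs_le.mp h3
          linarith [this.1]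
        have h5 : (0:ℝ) ≤ max 0 (1 - p.2 * ⟪wstar, p.1⟫) := le_max_left _ _
        linarith
      · rw [Set.indicator_of_notMem hpS, add_zero]
        have h2 : 1 < |⟪w', p.1⟫| := by
          rw [hSdef, Set.mem_setOf_eq, hux, sub_zero, abs_mul, abs_of_pos hr0,
            not_le] at hpS
          nlinarith
        set a : ℝ := p.2 * ⟪w', p.1⟫ with hadef
        set b : ℝ := p.2 * ⟪wstar, p.1⟫ with hbdef
        have hab : a = t * b := by rw [hadef, hbdef, hwx]; ring
        have haabs : 1 < |a| := by rw [hadef, abs_mul, hy1, one_mul]; exact h2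
        rcases le_or_gt 0 a with ha | ha
        · have : 1 < a := by rwa [abs_of_nonneg ha] at haabs
          have : max 0 (1 - a) = 0 := max_eq_left (by linarith)
          rw [this]
          exact le_max_left _ _
        · have hb : b ≤ a := by nlinarith
          exact max_le_max le_rfl (by linarith)
    have hIndInt : Integrable (S.indicator fun _ => (2:ℝ)) μ :=
      (integrable_const (2:ℝ)).indicator hS
    have hμS : (μ S).toReal ≤ c * r := by
      refine ENNReal.toReal_le_of_le_ofReal (by positivity) ?_
      exact hanti u 0 hu
    calc ∫ p, L w' p.1 p.2 ∂μ
        ≤ ∫ p, (L wstar p.1 p.2 + S.indicator (fun _ => (2:ℝ)) p) ∂μ :=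
          integral_mono_ae hInt' (hInt.add hIndInt) key
      _ = (∫ p, L wstar p.1 p.2 ∂μ) + ∫ p, S.indicator (fun _ => (2:ℝ)) p ∂μ :=
          integral_add hInt hIndInt
      _ = (∫ p, L wstar p.1 p.2 ∂μ) + (μ S).toReal * 2 := by
          rw [integral_indicator_const (2:ℝ) hS, smul_eq_mul, measureReal_def]
      _ ≤ (∫ p, L wstar p.1 p.2 ∂μ) + (2 * c + 1) * r := by nlinarith
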